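/- arXiv:1408.5267 — 2 statements merged into one kernel-verified Lean document; each statement's English description precedes it below -/
import Mathlib

section
/- Let Y be a continuous supermartingale with Doob–Meyer decomposition Y = Y₀ + M − K, where M is a continuous martingale with M₀ = 0 and K is a continuous nondecreasing adapted process with K₀ = 0. Suppose E[sup_{t≤T}|Y_t|²] < ∞. Then E[K_T²] < ∞ and E[⟨M⟩_T] < ∞. -/
open MeasureTheory Filter Set Topology

/-! ### Auxiliary lemmas -/

/-- Abel-summation bound (auxiliary induction). -/
lemma dm_abel_aux (a y : ℕ → ℝ) (g : ℝ) (ha : ∀ i, a i ≤ a (i+1)) (ha0 : ∀ i, 0 ≤ a i)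
    (hy : ∀ i, |y i| ≤ g) (n : ℕ) :
    ∑ i ∈ Finset.range n, a i * (y i - y (i+1)) ≤ g * a n - a n * y n := by
  induction n with
  | zero => simp; nlinarith [abs_le.1 (hy 0), ha0 0]
  | succ n ih =>
    rw [Finset.sum_range_succ]
    have h1 := abs_le.1 (hy n)
    have h2 := abs_le.1 (hy (n+1))
    have h3 := ha n
    have h4 := ha0 n
    nlinarith

lemma dm_abel_bound (a y : ℕ → ℝ) (g : ℝ) (ha : ∀ i, a i ≤ a (i+1)) (ha0 : ∀ i, 0 ≤ a i)
    (hy : ∀ i, |y i| ≤ g) (n : ℕ) :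
    ∑ i ∈ Finset.range n, a i * (y i - y (i+1)) ≤ 2 * g * a n := by
  have h1 := dm_abel_aux a y g ha ha0 hy n
  have h2 := abs_le.1 (hy n)
  have h3 := ha0 n
  nlinarith

lemma dm_sq_ident (a : ℕ → ℝ) (n : ℕ) :
    a n ^ 2 = a 0 ^ 2 + 2 * ∑ i ∈ Finset.range n, a i * (a (i+1) - a i)
      + ∑ i ∈ Finset.range n, (a (i+1) - a i) ^ 2 := by
  induction n with
  | zero => simp
  | succ n ih => rw [Finset.sum_range_succ, Finset.sum_range_succ]; ring_nf; ring_nf at ih; linarith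

/-- Expectation of a bounded `ℱ s`-measurable variable against a martingale increment vanishes. -/
lemma dm_mart_mul {Ω : Type*} {m : MeasurableSpace Ω} {μ : Measure Ω} [IsProbabilityMeasure μ]
    {ℱ : Filtration ℝ m} {M : ℝ → Ω → ℝ} (hM : Martingale M ℱ μ) {s t : ℝ} (hst : s ≤ t)
    {a : Ω → ℝ} (ha : StronglyMeasurable[ℱ s] a) {c : ℝ} (hab : ∀ ω, ‖a ω‖ ≤ c) :
    ∫ ω, a ω * M t ω ∂μ = ∫ ω, a ω * M s ω ∂μ := by
  have hle : ℱ s ≤ m := ℱ.le s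
  haveI : SigmaFinite (μ.trim hle) := by infer_instance
  have hpull : μ[(fun ω => a ω * M t ω)|ℱ s] =ᵐ[μ] fun ω => a ω * (μ[M t|ℱ s]) ω :=
    condExp_stronglyMeasurable_mul_of_bound hle ha (hM.integrable t) c
      (Eventually.of_forall hab)
  calc ∫ ω, a ω * M t ω ∂μ = ∫ ω, (μ[(fun ω => a ω * M t ω)|ℱ s]) ω ∂μ :=
        (integral_condExp hle).symm
    _ = ∫ ω, a ω * (μ[M t|ℱ s]) ω ∂μ := integral_congr_ae hpull
    _ = ∫ ω, a ω * M s ω ∂μ := integral_congr_ae <| by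
        filter_upwards [hM.condExp_ae_eq hst] with ω h using by rw [h]

/-- The uniform grid on `[0,T]` with `n` intervals, clamped at index `n`. -/
noncomputable def dmGrid (T : ℝ) (n i : ℕ) : ℝ := ((min i n : ℕ) : ℝ) * T / n

lemma dmGrid_mem {T : ℝ} (hT : 0 < T) (n i : ℕ) (hn : n ≠ 0) : dmGrid T n i ∈ Icc 0 T := by
  unfold dmGrid
  constructor
  · positivity
  · rw [div_le_iff₀ (by positivity : (0:ℝ) < n)]
    have : ((min i n : ℕ) : ℝ) ≤ n := by exact_mod_cast Nat.min_le_right i n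
    nlinarith

lemma dmGrid_mono {T : ℝ} (hT : 0 < T) (n i : ℕ) : dmGrid T n i ≤ dmGrid T n (i+1) := by
  unfold dmGrid
  gcongr
  omega

lemma dmGrid_zero {T : ℝ} (n : ℕ) : dmGrid T n 0 = 0 := by simp [dmGrid]

lemma dmGrid_last {T : ℝ} (n : ℕ) (hn : n ≠ 0) : dmGrid T n n = T := by
  have : (n:ℝ) ≠ 0 := by exact_mod_cast hn
  rw [dmGrid, min_self]
  field_simp

lemma dmGrid_mesh {T : ℝ} (hT : 0 < T) (n i : ℕ) : dmGrid T n (i+1) - dmGrid T n i ≤ T / n := by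
  rcases Nat.eq_zero_or_pos n with hn | hn
  · simp [hn, dmGrid]
  unfold dmGrid
  rw [div_sub_div_same, ← sub_mul]
  have h1 : ((min (i+1) n : ℕ) : ℝ) - ((min i n : ℕ) : ℝ) ≤ 1 := by
    have h2 : min (i+1) n ≤ 1 + min i n := by omega
    exact sub_le_iff_le_add.2 (by exact_mod_cast h2)
  have hn' : (0:ℝ) < n := by exact_mod_cast hn
  calc (((min (i+1) n : ℕ) : ℝ) - ((min i n : ℕ) : ℝ)) * T / n ≤ 1 * T / n := by
        gcongr
    _ = T / n := by ring

lemma dm_sm_min {Ω : Type*} {m' : MeasurableSpace Ω} {f : Ω → ℝ}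
    (hf : StronglyMeasurable[m'] f) (c : ℝ) :
    StronglyMeasurable[m'] (fun ω => min (f ω) c) :=
  hf.inf stronglyMeasurable_const

lemma dm_min_sub_min_le {a b c : ℝ} (h : b ≤ a) : min a c - min b c ≤ a - b := by
  rcases le_total a c with h1 | h1 <;> rcases le_total b c with h2 | h2 <;>
    simp [min_eq_left, min_eq_right, h1, h2] <;> linarith

/-- The sum of squared truncated increments of a continuous monotone function along
uniform grids tends to `0`. -/
lemma dm_W_tendsto (T c : ℝ) (hT : 0 < T) (hc : 0 ≤ c) (f : ℝ → ℝ)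
    (hf : Continuous f) (hmono : MonotoneOn f (Icc 0 T)) (hf0 : f 0 = 0) :
    Tendsto (fun n : ℕ => ∑ i ∈ Finset.range n,
      (min (f (dmGrid T n (i+1))) c - min (f (dmGrid T n i)) c) ^ 2) atTop (𝓝 0) := by
  rw [Metric.tendsto_atTop]
  intro ε hε
  set ε' : ℝ := ε / (2 * (c + 1)) with hε'def
  have hε' : 0 < ε' := by positivity
  have hu := isCompact_Icc.uniformContinuousOn_of_continuous
    (s := Icc (0:ℝ) T) hf.continuousOn
  rw [Metric.uniformContinuousOn_iff] at hu
  obtain ⟨d, hd, hdd⟩ := hu ε' hε'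
  obtain ⟨N, hN⟩ := exists_nat_gt (T / d)
  refine ⟨max N 1, fun n hn => ?_⟩
  have hn1 : 1 ≤ n := le_trans (le_max_right N 1) hn
  have hn0 : n ≠ 0 := by omega
  have hnpos : (0:ℝ) < n := by positivity
  have hmesh : T / n < d := by
    rw [div_lt_iff₀ hnpos]
    have h1 : T / d < n := lt_of_lt_of_le hN (by exact_mod_cast le_trans (le_max_left N 1) hn)
    rw [div_lt_iff₀ hd] at h1
    linarith [h1]
  set a : ℕ → ℝ := fun i => min (f (dmGrid T n i)) c with hadef
  have hmem := fun i => dmGrid_mem hT n i hn0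
  have hfmono : ∀ i, f (dmGrid T n i) ≤ f (dmGrid T n (i+1)) :=
    fun i => hmono (hmem i) (hmem (i+1)) (dmGrid_mono hT n i)
  have hΔ0 : ∀ i, 0 ≤ a (i+1) - a i := fun i =>
    sub_nonneg.2 (min_le_min (hfmono i) le_rfl)
  have hΔε : ∀ i, a (i+1) - a i ≤ ε' := by
    intro i
    have h1 : a (i+1) - a i ≤ f (dmGrid T n (i+1)) - f (dmGrid T n i) :=
      dm_min_sub_min_le (hfmono i)
    have h2 : dist (dmGrid T n (i+1)) (dmGrid T n i) < d := by
      rw [Real.dist_eq, abs_of_nonneg (sub_nonneg.2 (dmGrid_mono hT n i))]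
      exact lt_of_le_of_lt (dmGrid_mesh hT n i) hmesh
    have h3 := hdd _ (hmem (i+1)) _ (hmem i) h2
    rw [Real.dist_eq] at h3
    have := abs_le.1 h3.le
    linarith [this.2, h1]
  have hsum : ∑ i ∈ Finset.range n, (a (i+1) - a i) = a n - a 0 :=
    Finset.sum_range_sub a n
  have ha0 : a 0 = 0 := by simp [hadef, dmGrid_zero, hf0, hc]
  have han : a n ≤ c := min_le_right _ _
  have hW : ∑ i ∈ Finset.range n, (a (i+1) - a i) ^ 2 ≤ ε' * c := by
    calc ∑ i ∈ Finset.range n, (a (i+1) - a i) ^ 2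
        ≤ ∑ i ∈ Finset.range n, ε' * (a (i+1) - a i) := by
          refine Finset.sum_le_sum fun i _ => ?_
          have := hΔ0 i; have := hΔε i; nlinarith
      _ = ε' * (a n - a 0) := by rw [← Finset.mul_sum, hsum]
      _ ≤ ε' * c := by rw [ha0]; nlinarith
  have hWnn : 0 ≤ ∑ i ∈ Finset.range n, (a (i+1) - a i) ^ 2 :=
    Finset.sum_nonneg fun i _ => sq_nonneg _
  rw [Real.dist_eq, sub_zero, abs_of_nonneg hWnn]
  calc ∑ i ∈ Finset.range n, (a (i+1) - a i) ^ 2 ≤ ε' * c := hW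
    _ < ε := by rw [hε'def]; rw [div_mul_eq_mul_div, div_lt_iff₀ (by positivity)]; nlinarith

/-- Integrability estimates from the Doob–Meyer decomposition (Step 2 of Proposition 8.9):
if the continuous supermartingale `Y = Y₀ + M − K` satisfies `E[sup_{t≤T}|Y_t|²] < ∞`,
where `M` is a continuous martingale with `M₀ = 0`, `K` is a continuous nondecreasing
adapted process with `K₀ = 0`, and `QV = ⟨M⟩` is the quadratic variation of `M`
(characterized by `M² − QV` being a martingale, `QV` continuous nondecreasing, `QV₀ = 0`),
then `E[K_T²] < ∞` and `E[⟨M⟩_T] < ∞`. -/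
theorem doobMeyer_square_integrable {Ω : Type*} {m : MeasurableSpace Ω}
    (μ : Measure Ω) [IsProbabilityMeasure μ]
    (ℱ : Filtration ℝ m) (T : ℝ) (hT : 0 < T)
    (Y M K QV : ℝ → Ω → ℝ)
    (hYsuper : Supermartingale Y ℱ μ)
    (hM : Martingale M ℱ μ) (hM0 : ∀ ω, M 0 ω = 0)
    (hMcont : ∀ ω, Continuous fun t => M t ω)
    (hK0 : ∀ ω, K 0 ω = 0) (hKadp : Adapted ℱ K)
    (hKmono : ∀ ω, MonotoneOn (fun t => K t ω) (Icc 0 T))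
    (hKcont : ∀ ω, Continuous fun t => K t ω)
    (hdec : ∀ t ∈ Icc (0:ℝ) T, ∀ ω, Y t ω = Y 0 ω + M t ω - K t ω)
    (hQV0 : ∀ ω, QV 0 ω = 0)
    (hQVmono : ∀ ω, MonotoneOn (fun t => QV t ω) (Icc 0 T))
    (hQVcont : ∀ ω, Continuous fun t => QV t ω)
    (hQVmart : Martingale (fun t ω => (M t ω) ^ 2 - QV t ω) ℱ μ)
    (hYsq : Integrable (fun ω => ⨆ t : Icc (0:ℝ) T, |Y (t : ℝ) ω| ^ 2) μ) :
    Integrable (fun ω => (K T ω) ^ 2) μ ∧ Integrable (fun ω => QV T ω) μ := by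
  classical
  have hT0 : (0:ℝ) ∈ Icc (0:ℝ) T := ⟨le_rfl, hT.le⟩
  have hTT : T ∈ Icc (0:ℝ) T := ⟨hT.le, le_rfl⟩
  haveI : Nonempty (Icc (0:ℝ) T) := ⟨⟨0, hT0⟩⟩
  set H : Ω → ℝ := fun ω => ⨆ t : Icc (0:ℝ) T, |Y (t : ℝ) ω| ^ 2 with hHdef
  -- Y is continuous on [0,T]
  have hYc : ∀ ω, Continuous (fun t : Icc (0:ℝ) T => |Y (t:ℝ) ω| ^ 2) := by
    intro ω
    have heq : (fun t : Icc (0:ℝ) T => |Y (t:ℝ) ω| ^ 2)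
        = fun t : Icc (0:ℝ) T => |Y 0 ω + M (t:ℝ) ω - K (t:ℝ) ω| ^ 2 := by
      funext t; rw [hdec t t.2]
    rw [heq]
    exact ((continuous_const.add ((hMcont ω).comp continuous_subtype_val)).sub
      ((hKcont ω).comp continuous_subtype_val)).abs.pow 2
  have hbdd : ∀ ω, BddAbove (range fun t : Icc (0:ℝ) T => |Y (t:ℝ) ω| ^ 2) :=
    fun ω => (isCompact_range (hYc ω)).bddAbove
  have hHle : ∀ ω, ∀ t ∈ Icc (0:ℝ) T, |Y t ω| ^ 2 ≤ H ω := by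
    intro ω t ht
    exact le_ciSup (hbdd ω) (⟨t, ht⟩ : Icc (0:ℝ) T)
  have hH0 : ∀ ω, 0 ≤ H ω := fun ω => le_trans (sq_nonneg _) (hHle ω 0 hT0)
  set g : Ω → ℝ := fun ω => Real.sqrt (H ω) with hgdef
  have hg0 : ∀ ω, 0 ≤ g ω := fun ω => Real.sqrt_nonneg _
  have hgsq : ∀ ω, g ω ^ 2 = H ω := fun ω => Real.sq_sqrt (hH0 ω)
  have hYg : ∀ ω, ∀ t ∈ Icc (0:ℝ) T, |Y t ω| ≤ g ω := by
    intro ω t ht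
    calc |Y t ω| = Real.sqrt (|Y t ω| ^ 2) := (Real.sqrt_sq (abs_nonneg _)).symm
      _ ≤ g ω := Real.sqrt_le_sqrt (hHle ω t ht)
  have hgmeas : AEStronglyMeasurable g μ :=
    Real.continuous_sqrt.comp_aestronglyMeasurable hYsq.1
  have hgint : Integrable g μ := by
    refine (hYsq.add (integrable_const 1)).mono hgmeas (Eventually.of_forall fun ω => ?_)
    have h1 : g ω ≤ H ω + 1 := by nlinarith [hgsq ω, hg0 ω, hH0 ω]
    simp only [Pi.add_apply]
    rw [Real.norm_eq_abs, Real.norm_eq_abs, abs_of_nonneg (hg0 ω),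
      abs_of_nonneg (by linarith [hH0 ω] : (0:ℝ) ≤ H ω + 1)]
    exact h1
  -- facts about K
  have hKeq : ∀ t ∈ Icc (0:ℝ) T, ∀ ω, K t ω = Y 0 ω + M t ω - Y t ω := by
    intro t ht ω; have := hdec t ht ω; linarith
  have hKint : ∀ t ∈ Icc (0:ℝ) T, Integrable (K t) μ := by
    intro t ht
    exact (((hYsuper.integrable 0).add (hM.integrable t)).sub (hYsuper.integrable t)).congr
      (Eventually.of_forall fun ω => (hKeq t ht ω).symm)
  have hKnn : ∀ t ∈ Icc (0:ℝ) T, ∀ ω, 0 ≤ K t ω := by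
    intro t ht ω
    have := hKmono ω hT0 ht ht.1
    simpa [hK0 ω] using this
  have hKTm : StronglyMeasurable (K T) := (hKadp T).stronglyMeasurable.mono (ℱ.le T)
  -- THE KEY TRUNCATED BOUND
  have key : ∀ c : ℝ, 0 ≤ c →
      ∫ ω, (min (K T ω) c) ^ 2 ∂μ ≤ 16 * ∫ ω, H ω ∂μ := by
    intro c hc
    set u : Ω → ℝ := fun ω => min (K T ω) c with hudef
    have hu0 : ∀ ω, 0 ≤ u ω := fun ω => le_min (hKnn T hTT ω) hc
    have huc : ∀ ω, u ω ≤ c := fun ω => min_le_right _ _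
    have hum : StronglyMeasurable u := hKTm.inf stronglyMeasurable_const
    have huInt2 : Integrable (fun ω => u ω ^ 2) μ := by
      refine (integrable_const (c ^ 2)).mono' (hum.pow 2).aestronglyMeasurable
        (Eventually.of_forall fun ω => ?_)
      rw [Real.norm_eq_abs, abs_of_nonneg (by positivity : (0:ℝ) ≤ u ω ^ 2)]
      nlinarith [hu0 ω, huc ω]
    -- truncated increments process
    set W : ℕ → Ω → ℝ := fun n ω => ∑ i ∈ Finset.range n,
      (min (K (dmGrid T n (i+1)) ω) c - min (K (dmGrid T n i) ω) c) ^ 2 with hWdef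
    -- the per-n bound
    have main_n : ∀ n : ℕ, 1 ≤ n →
        ∫ ω, u ω ^ 2 ∂μ ≤ 16 * ∫ ω, H ω ∂μ + 2 * ∫ ω, W n ω ∂μ := by
      intro n hn1
      have hn0 : n ≠ 0 := by omega
      have hmem : ∀ i, dmGrid T n i ∈ Icc 0 T := fun i => dmGrid_mem hT n i hn0
      set a : ℕ → Ω → ℝ := fun i ω => min (K (dmGrid T n i) ω) c with hadef
      have ham : ∀ i, StronglyMeasurable[ℱ (dmGrid T n i)] (a i) :=
        fun i => dm_sm_min (hKadp (dmGrid T n i)).stronglyMeasurable c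
      have ha0 : ∀ i ω, 0 ≤ a i ω := fun i ω => le_min (hKnn _ (hmem i) ω) hc
      have hac : ∀ i ω, a i ω ≤ c := fun i ω => min_le_right _ _
      have habn : ∀ i, ∀ ω, ‖a i ω‖ ≤ c := by
        intro i ω
        rw [Real.norm_eq_abs, abs_of_nonneg (ha0 i ω)]
        exact hac i ω
      have hamono : ∀ i ω, a i ω ≤ a (i+1) ω := fun i ω =>
        min_le_min (hKmono ω (hmem i) (hmem (i+1)) (dmGrid_mono hT n i)) le_rfl
      have haT : ∀ ω, a n ω = u ω := by
        intro ω; simp only [hadef, hudef, dmGrid_last n hn0]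
      -- integrable pieces
      have hKd : ∀ i, Integrable (fun ω => K (dmGrid T n (i+1)) ω - K (dmGrid T n i) ω) μ :=
        fun i => (hKint _ (hmem (i+1))).sub (hKint _ (hmem i))
      have hYd : ∀ i, Integrable (fun ω => Y (dmGrid T n i) ω - Y (dmGrid T n (i+1)) ω) μ :=
        fun i => (hYsuper.integrable _).sub (hYsuper.integrable _)
      have hamm : ∀ i, AEStronglyMeasurable (a i) μ :=
        fun i => ((ham i).mono (ℱ.le _)).aestronglyMeasurable
      have hSterm : ∀ i, Integrable
          (fun ω => a i ω * (K (dmGrid T n (i+1)) ω - K (dmGrid T n i) ω)) μ := fun i =>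
        (hKd i).bdd_mul (hamm i) (Eventually.of_forall (habn i))
      have hZterm : ∀ i, Integrable
          (fun ω => a i ω * (Y (dmGrid T n i) ω - Y (dmGrid T n (i+1)) ω)) μ := fun i =>
        (hYd i).bdd_mul (hamm i) (Eventually.of_forall (habn i))
      have hMterm : ∀ i j, Integrable (fun ω => a i ω * M (dmGrid T n j) ω) μ := fun i j =>
        (hM.integrable _).bdd_mul (hamm i) (Eventually.of_forall (habn i))
      -- per-term integral identity
      have hterm_eq : ∀ i, ∫ ω, a i ω * (K (dmGrid T n (i+1)) ω - K (dmGrid T n i) ω) ∂μ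
          = ∫ ω, a i ω * (Y (dmGrid T n i) ω - Y (dmGrid T n (i+1)) ω) ∂μ := by
        intro i
        have hsplit : (fun ω => a i ω * (K (dmGrid T n (i+1)) ω - K (dmGrid T n i) ω))
            = fun ω => a i ω * (Y (dmGrid T n i) ω - Y (dmGrid T n (i+1)) ω)
              + (a i ω * M (dmGrid T n (i+1)) ω - a i ω * M (dmGrid T n i) ω) := by
          funext ω
          rw [hKeq _ (hmem (i+1)) ω, hKeq _ (hmem i) ω]
          ring
        have hMd : Integrable (fun ω => a i ω * M (dmGrid T n (i+1)) ω
            - a i ω * M (dmGrid T n i) ω) μ := (hMterm i (i+1)).sub (hMterm i i)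
        rw [hsplit, integral_add (hZterm i) hMd,
          integral_sub (hMterm i (i+1)) (hMterm i i),
          dm_mart_mul hM (dmGrid_mono hT n i) (ham i) (habn i)]
        ring
      -- the sums
      set S : Ω → ℝ := fun ω => ∑ i ∈ Finset.range n,
        a i ω * (K (dmGrid T n (i+1)) ω - K (dmGrid T n i) ω) with hSdef
      set Z : Ω → ℝ := fun ω => ∑ i ∈ Finset.range n,
        a i ω * (Y (dmGrid T n i) ω - Y (dmGrid T n (i+1)) ω) with hZdef
      have hSint : Integrable S μ := integrable_finset_sum _ fun i _ => hSterm i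
      have hZint : Integrable Z μ := integrable_finset_sum _ fun i _ => hZterm i
      have hSZ : ∫ ω, S ω ∂μ = ∫ ω, Z ω ∂μ := by
        rw [hSdef, hZdef, integral_finset_sum _ fun i _ => hSterm i,
          integral_finset_sum _ fun i _ => hZterm i]
        exact Finset.sum_congr rfl fun i _ => hterm_eq i
      -- pointwise Abel bound : Z ≤ u * (2 g)
      set B : Ω → ℝ := fun ω => u ω * (2 * g ω) with hBdef
      have hBint' : Integrable (u * fun ω => 2 * g ω) μ := by
        refine (hgint.const_mul 2).bdd_mul (c := c) hum.aestronglyMeasurable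
          (Eventually.of_forall fun ω => ?_)
        rw [Real.norm_eq_abs, abs_of_nonneg (hu0 ω)]
        exact huc ω
      have hBint : Integrable B μ := hBint'.congr (Eventually.of_forall fun ω => rfl)
      have hZB : ∀ ω, Z ω ≤ B ω := by
        intro ω
        have habel := dm_abel_bound (fun i => a i ω) (fun i => Y (dmGrid T n i) ω) (g ω)
          (fun i => hamono i ω) (fun i => ha0 i ω)
          (fun i => hYg ω _ (hmem i)) n
        rw [haT ω] at habel
        calc Z ω ≤ 2 * g ω * u ω := habel
          _ = B ω := by rw [hBdef]; ring
      -- pointwise square decomposition : u² ≤ 2 S + W n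
      have husq : ∀ ω, u ω ^ 2 ≤ 2 * S ω + W n ω := by
        intro ω
        have hid := dm_sq_ident (fun i => a i ω) n
        have haz : a 0 ω = 0 := by
          simp [hadef, dmGrid_zero, hK0 ω, min_eq_left hc]
        have hsum_le : ∑ i ∈ Finset.range n, a i ω * (a (i+1) ω - a i ω) ≤ S ω := by
          refine Finset.sum_le_sum fun i _ => ?_
          have h1 : a (i+1) ω - a i ω ≤ K (dmGrid T n (i+1)) ω - K (dmGrid T n i) ω :=
            dm_min_sub_min_le (hKmono ω (hmem i) (hmem (i+1)) (dmGrid_mono hT n i))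
          exact mul_le_mul_of_nonneg_left h1 (ha0 i ω)
        have hW_eq : W n ω = ∑ i ∈ Finset.range n, (a (i+1) ω - a i ω) ^ 2 := rfl
        have h2 : a n ω ^ 2 = u ω ^ 2 := by rw [haT ω]
        have h3 : a 0 ω ^ 2 = 0 := by rw [haz]; ring
        linarith [hid, hsum_le, h2, h3, hW_eq.le, hW_eq.ge]
      -- W is integrable
      have hWm : StronglyMeasurable (W n) := by
        refine Finset.stronglyMeasurable_fun_sum _ fun i _ => ?_
        exact (((dm_sm_min ((hKadp (dmGrid T n (i+1))).stronglyMeasurable.mono (ℱ.le _)) c)).sub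
          ((dm_sm_min ((hKadp (dmGrid T n i)).stronglyMeasurable.mono (ℱ.le _)) c))).pow 2
      have hWint : Integrable (W n) μ := by
        refine (integrable_const ((n : ℝ) * c ^ 2)).mono' hWm.aestronglyMeasurable
          (Eventually.of_forall fun ω => ?_)
        have hb : ∀ i ∈ Finset.range n,
            (min (K (dmGrid T n (i+1)) ω) c - min (K (dmGrid T n i) ω) c) ^ 2 ≤ c ^ 2 := by
          intro i _
          have h1 := ha0 i ω; have h2 := hac i ω
          have h3 := ha0 (i+1) ω; have h4 := hac (i+1) ω
          simp only [hadef] at h1 h2 h3 h4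
          nlinarith
        have hWnn : 0 ≤ W n ω := Finset.sum_nonneg fun i _ => sq_nonneg _
        rw [Real.norm_eq_abs, abs_of_nonneg hWnn]
        calc W n ω ≤ ∑ _i ∈ Finset.range n, c ^ 2 := Finset.sum_le_sum hb
          _ = (n : ℝ) * c ^ 2 := by simp [mul_comm]
      -- integrate everything
      have step1 : ∫ ω, u ω ^ 2 ∂μ ≤ 2 * ∫ ω, S ω ∂μ + ∫ ω, W n ω ∂μ := by
        have h1 : ∫ ω, u ω ^ 2 ∂μ ≤ ∫ ω, (2 * S ω + W n ω) ∂μ :=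
          integral_mono huInt2 ((hSint.const_mul 2).add hWint) husq
        rwa [integral_add (hSint.const_mul 2) hWint, integral_const_mul 2 S] at h1
      have step3 : ∫ ω, Z ω ∂μ ≤ ∫ ω, B ω ∂μ := integral_mono hZint hBint hZB
      have step4 : ∫ ω, B ω ∂μ ≤ (∫ ω, u ω ^ 2 ∂μ) / 4 + 4 * ∫ ω, H ω ∂μ := by
        have h1 : ∀ ω, B ω ≤ u ω ^ 2 / 4 + 4 * H ω := by
          intro ω
          have hh := hgsq ω
          show u ω * (2 * g ω) ≤ u ω ^ 2 / 4 + 4 * H ω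
          nlinarith [sq_nonneg (u ω / 2 - 2 * g ω), hg0 ω, hu0 ω]
        have h2 : ∫ ω, B ω ∂μ ≤ ∫ ω, (u ω ^ 2 / 4 + 4 * H ω) ∂μ :=
          integral_mono hBint ((huInt2.div_const 4).add (hYsq.const_mul 4)) h1
        rwa [integral_add (huInt2.div_const 4) (hYsq.const_mul 4), integral_div,
          integral_const_mul 4 H] at h2
      have hfin : ∫ ω, u ω ^ 2 ∂μ ≤ (∫ ω, u ω ^ 2 ∂μ) / 2 + 8 * ∫ ω, H ω ∂μ
          + ∫ ω, W n ω ∂μ := by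
        calc ∫ ω, u ω ^ 2 ∂μ ≤ 2 * ∫ ω, S ω ∂μ + ∫ ω, W n ω ∂μ := step1
          _ = 2 * ∫ ω, Z ω ∂μ + ∫ ω, W n ω ∂μ := by rw [hSZ]
          _ ≤ 2 * ((∫ ω, u ω ^ 2 ∂μ) / 4 + 4 * ∫ ω, H ω ∂μ) + ∫ ω, W n ω ∂μ := by
              have := le_trans step3 step4; linarith
          _ = (∫ ω, u ω ^ 2 ∂μ) / 2 + 8 * ∫ ω, H ω ∂μ + ∫ ω, W n ω ∂μ := by ring
      linarith
    -- limit n → ∞ : ∫ W n → 0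
    have hWtend : Tendsto (fun n : ℕ => ∫ ω, W n ω ∂μ) atTop (𝓝 0) := by
      have h0 : (0 : ℝ) = ∫ (_ : Ω), (0:ℝ) ∂μ := by simp
      rw [h0]
      refine tendsto_integral_of_dominated_convergence (fun _ => c ^ 2) ?_ (integrable_const _)
        ?_ ?_
      · intro n
        refine (Finset.stronglyMeasurable_fun_sum _ fun i _ => ?_).aestronglyMeasurable
        exact (((dm_sm_min ((hKadp (dmGrid T n (i+1))).stronglyMeasurable.mono (ℱ.le _)) c)).sub
          ((dm_sm_min ((hKadp (dmGrid T n i)).stronglyMeasurable.mono (ℱ.le _)) c))).pow 2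
      · intro n
        refine Eventually.of_forall fun ω => ?_
        rcases Nat.eq_zero_or_pos n with hn | hn
        · simp [hWdef, hn]; positivity
        have hn0 : n ≠ 0 := by omega
        have hmem : ∀ i, dmGrid T n i ∈ Icc 0 T := fun i => dmGrid_mem hT n i hn0
        have hΔ0 : ∀ i, 0 ≤ min (K (dmGrid T n (i+1)) ω) c - min (K (dmGrid T n i) ω) c :=
          fun i => sub_nonneg.2 (min_le_min
            (hKmono ω (hmem i) (hmem (i+1)) (dmGrid_mono hT n i)) le_rfl)
        have hΔc : ∀ i, min (K (dmGrid T n (i+1)) ω) c - min (K (dmGrid T n i) ω) c ≤ c := by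
          intro i
          have h1 : 0 ≤ min (K (dmGrid T n i) ω) c := le_min (hKnn _ (hmem i) ω) hc
          have h2 : min (K (dmGrid T n (i+1)) ω) c ≤ c := min_le_right _ _
          linarith
        have htel : ∑ i ∈ Finset.range n,
            (min (K (dmGrid T n (i+1)) ω) c - min (K (dmGrid T n i) ω) c)
            = min (K (dmGrid T n n) ω) c - min (K (dmGrid T n 0) ω) c :=
          Finset.sum_range_sub (fun i => min (K (dmGrid T n i) ω) c) n
        have hWnn : 0 ≤ W n ω := Finset.sum_nonneg fun i _ => sq_nonneg _
        rw [Real.norm_eq_abs, abs_of_nonneg hWnn]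
        calc W n ω ≤ ∑ i ∈ Finset.range n,
              c * (min (K (dmGrid T n (i+1)) ω) c - min (K (dmGrid T n i) ω) c) := by
              refine Finset.sum_le_sum fun i _ => ?_
              have := hΔ0 i; have := hΔc i; nlinarith
          _ = c * (min (K (dmGrid T n n) ω) c - min (K (dmGrid T n 0) ω) c) := by
              rw [← Finset.mul_sum, htel]
          _ ≤ c ^ 2 := by
              have h1 : min (K (dmGrid T n n) ω) c ≤ c := min_le_right _ _
              have h2 : 0 ≤ min (K (dmGrid T n 0) ω) c := le_min (hKnn _ (hmem 0) ω) hc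
              nlinarith
      · exact Eventually.of_forall fun ω =>
          dm_W_tendsto T c hT hc (fun t => K t ω) (hKcont ω) (hKmono ω) (hK0 ω)
    have hlim : Tendsto (fun n : ℕ => 16 * ∫ ω, H ω ∂μ + 2 * ∫ ω, W n ω ∂μ) atTop
        (𝓝 (16 * ∫ ω, H ω ∂μ)) := by
      have := (hWtend.const_mul 2).const_add (16 * ∫ ω, H ω ∂μ)
      simpa using this
    exact ge_of_tendsto hlim (eventually_atTop.2 ⟨1, fun n hn => main_n n hn⟩)
  -- conclude integrability of (K T)² by monotone convergence
  have hKT2 : Integrable (fun ω => (K T ω) ^ 2) μ := by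
    have hmeas : AEStronglyMeasurable (fun ω => (K T ω) ^ 2) μ :=
      (hKTm.pow 2).aestronglyMeasurable
    refine ⟨hmeas, ?_⟩
    rw [hasFiniteIntegral_iff_ofReal (Eventually.of_forall fun ω => sq_nonneg _)]
    have hsup : ∀ ω, ENNReal.ofReal ((K T ω) ^ 2)
        = ⨆ j : ℕ, ENNReal.ofReal ((min (K T ω) j) ^ 2) := by
      intro ω
      refine le_antisymm ?_ ?_
      · obtain ⟨j, hj⟩ := exists_nat_ge (K T ω)
        refine le_iSup_of_le j ?_
        rw [min_eq_left hj]
      · refine iSup_le fun j => ?_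
        refine ENNReal.ofReal_le_ofReal ?_
        have h1 : 0 ≤ min (K T ω) (j:ℝ) := le_min (hKnn T hTT ω) (Nat.cast_nonneg j)
        have h2 : min (K T ω) (j:ℝ) ≤ K T ω := min_le_left _ _
        nlinarith
    have hmono : Monotone fun (j : ℕ) (ω : Ω) => ENNReal.ofReal ((min (K T ω) j) ^ 2) := by
      intro j k hjk
      intro ω
      refine ENNReal.ofReal_le_ofReal ?_
      have h1 : 0 ≤ min (K T ω) (j:ℝ) := le_min (hKnn T hTT ω) (Nat.cast_nonneg j)
      have h2 : min (K T ω) (j:ℝ) ≤ min (K T ω) (k:ℝ) :=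
        min_le_min le_rfl (by exact_mod_cast hjk)
      nlinarith
    have hjm : ∀ j : ℕ, Measurable fun ω => ENNReal.ofReal ((min (K T ω) j) ^ 2) := by
      intro j
      exact (((hKTm.measurable.min measurable_const).pow_const 2)).ennreal_ofReal
    calc ∫⁻ ω, ENNReal.ofReal ((K T ω) ^ 2) ∂μ
        = ∫⁻ ω, ⨆ j : ℕ, ENNReal.ofReal ((min (K T ω) j) ^ 2) ∂μ := by
          congr 1; funext ω; exact hsup ω
      _ = ⨆ j : ℕ, ∫⁻ ω, ENNReal.ofReal ((min (K T ω) j) ^ 2) ∂μ :=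
          lintegral_iSup hjm hmono
      _ ≤ ENNReal.ofReal (16 * ∫ ω, H ω ∂μ) := by
          refine iSup_le fun j => ?_
          have hint : Integrable (fun ω => (min (K T ω) j) ^ 2) μ := by
            refine (integrable_const ((j:ℝ) ^ 2)).mono'
              ((hKTm.inf stronglyMeasurable_const).pow 2).aestronglyMeasurable
              (Eventually.of_forall fun ω => ?_)
            have h1 : 0 ≤ min (K T ω) (j:ℝ) := le_min (hKnn T hTT ω) (Nat.cast_nonneg j)
            have h2 : min (K T ω) (j:ℝ) ≤ j := min_le_right _ _
            rw [Real.norm_eq_abs, abs_of_nonneg (by positivity)]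
            nlinarith
          rw [← ofReal_integral_eq_lintegral_ofReal hint
            (Eventually.of_forall fun ω => sq_nonneg _)]
          exact ENNReal.ofReal_le_ofReal (key j (Nat.cast_nonneg j))
      _ < ⊤ := ENNReal.ofReal_lt_top
  refine ⟨hKT2, ?_⟩
  -- QV part
  have hYTm : ∀ t : ℝ, StronglyMeasurable (Y t) := fun t => (hYsuper.stronglyAdapted t).mono (ℱ.le t)
  have hYt2 : ∀ t ∈ Icc (0:ℝ) T, Integrable (fun ω => (Y t ω) ^ 2) μ := by
    intro t ht
    refine hYsq.mono' ((hYTm t).pow 2).aestronglyMeasurable (Eventually.of_forall fun ω => ?_)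
    rw [Real.norm_eq_abs, abs_of_nonneg (sq_nonneg _), ← sq_abs]
    exact hHle ω t ht
  have hMT2 : Integrable (fun ω => (M T ω) ^ 2) μ := by
    have hbound : ∀ ω, ‖(M T ω) ^ 2‖
        ≤ 3 * (Y T ω) ^ 2 + 3 * (Y 0 ω) ^ 2 + 3 * (K T ω) ^ 2 := by
      intro ω
      have hMeq : M T ω = Y T ω - Y 0 ω + K T ω := by
        have := hdec T hTT ω; linarith
      rw [Real.norm_eq_abs, abs_of_nonneg (sq_nonneg _), hMeq]
      nlinarith [sq_nonneg (Y T ω + Y 0 ω), sq_nonneg (Y 0 ω + K T ω),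
        sq_nonneg (Y T ω - K T ω)]
    refine Integrable.mono' ?_ (((hM.stronglyAdapted T).mono (ℱ.le T)).pow 2).aestronglyMeasurable
      (Eventually.of_forall hbound)
    exact (((hYt2 T hTT).const_mul 3).add ((hYt2 0 hT0).const_mul 3)).add (hKT2.const_mul 3)
  have hdiff : Integrable (fun ω => (M T ω) ^ 2 - QV T ω) μ := hQVmart.integrable T
  exact (hMT2.sub hdiff).congr (Eventually.of_forall fun ω => by simp)
end

section
/- In the proof of stability by semilimits: let φ ∈ C^{1,2}(Q) and ū ∈ USC(Q) with (φ−ū)(t,x) < (φ−ū)(t',x') for all (t',x') ≠ (t,x) (strict minimum). Let (ε_n, t_n, x_n) → (0, t, x) with u^{ε_n}(t_n,x_n) → ū(t,x), where ū = limsup* u^ε. If (t̄_n, x̄_n) minimizes φ − u^{ε_n} over a compact neighborhood cl(O) of (t,x) containing all (t_n,x_n), then (t̄_n, x̄_n) → (t,x) and u^{ε_n}(t̄_n, x̄_n) → ū(t,x). -/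
open Set Filter

/-- Compactness claim (2.16) in the proof of the stability Theorem 2.6: let `φ` be
continuous and `ū` have a strict minimum of `φ − ū` at `p₀` on the compact set `K`; if
`p_n → p₀` with `u_n(p_n) → ū(p₀)`, `ū` dominates the relaxed upper limits of `(u_n)`
along converging sequences, and `q_n` minimizes `φ − u_n` over `K`, then `q_n → p₀` and
`u_n(q_n) → ū(p₀)`. -/
theorem minimizers_converge (dd : ℕ)
    (φ : (ℝ × (Fin dd → ℝ)) → ℝ) (hφ : Continuous φ)
    (ubar : (ℝ × (Fin dd → ℝ)) → ℝ)
    (u : ℕ → (ℝ × (Fin dd → ℝ)) → ℝ)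
    (K : Set (ℝ × (Fin dd → ℝ))) (hK : IsCompact K)
    (p₀ : ℝ × (Fin dd → ℝ)) (hp₀ : p₀ ∈ K)
    (hstrict : ∀ p ∈ K, p ≠ p₀ → φ p₀ - ubar p₀ < φ p - ubar p)
    (hub : ∀ σ : ℕ → ℕ, StrictMono σ →
      ∀ (q : ℕ → ℝ × (Fin dd → ℝ)) (qlim : ℝ × (Fin dd → ℝ)),
        Tendsto q atTop (nhds qlim) →
        limsup (fun n => u (σ n) (q n)) atTop ≤ ubar qlim)
    (hbdd : ∃ C : ℝ, ∀ n, ∀ p ∈ K, |u n p| ≤ C)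
    (pn : ℕ → ℝ × (Fin dd → ℝ)) (hpnK : ∀ n, pn n ∈ K)
    (hpn : Tendsto pn atTop (nhds p₀))
    (hval : Tendsto (fun n => u n (pn n)) atTop (nhds (ubar p₀)))
    (qn : ℕ → ℝ × (Fin dd → ℝ)) (hqnK : ∀ n, qn n ∈ K)
    (hqmin : ∀ n, ∀ r ∈ K, φ (qn n) - u n (qn n) ≤ φ r - u n r) :
    Tendsto qn atTop (nhds p₀) ∧
    Tendsto (fun n => u n (qn n)) atTop (nhds (ubar p₀)) := by
  obtain ⟨C, hC⟩ := hbdd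
  -- the pair sequence
  set R : ℕ → (ℝ × (Fin dd → ℝ)) × ℝ := fun n => (qn n, u n (qn n)) with hR
  have key : Tendsto R atTop (nhds (p₀, ubar p₀)) := by
    apply tendsto_of_subseq_tendsto
    intro ns hns
    obtain ⟨ms₁, hms₁, hcomp⟩ := strictMono_subseq_of_tendsto_atTop hns
    -- compactness of K ×ˢ Icc (-C) C
    have hKC : IsCompact (K ×ˢ Icc (-C) C) := hK.prod isCompact_Icc
    have hmem : ∀ k, R (ns (ms₁ k)) ∈ K ×ˢ Icc (-C) C := by
      intro k
      refine ⟨hqnK _, ?_⟩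
      exact abs_le.mp (hC _ _ (hqnK _))
    obtain ⟨a, haK, ms₂, hms₂, hconv⟩ := hKC.tendsto_subseq hmem
    refine ⟨ms₁ ∘ ms₂, ?_⟩
    set σ : ℕ → ℕ := fun k => ns (ms₁ (ms₂ k)) with hσ
    have hσmono : StrictMono σ := hcomp.comp hms₂
    have hconv' : Tendsto (fun k => R (σ k)) atTop (nhds a) := hconv
    have hq : Tendsto (fun k => qn (σ k)) atTop (nhds a.1) :=
      (continuous_fst.tendsto a).comp hconv'
    have hu : Tendsto (fun k => u (σ k) (qn (σ k))) atTop (nhds a.2) :=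
      (continuous_snd.tendsto a).comp hconv'
    -- hub gives a.2 ≤ ubar a.1
    have hub' : a.2 ≤ ubar a.1 := by
      have := hub σ hσmono (fun k => qn (σ k)) a.1 hq
      rwa [hu.limsup_eq] at this
    -- limit of minimality inequality
    have hσtop : Tendsto σ atTop atTop := hσmono.tendsto_atTop
    have hlhs : Tendsto (fun k => φ (qn (σ k)) - u (σ k) (qn (σ k))) atTop
        (nhds (φ a.1 - a.2)) := ((hφ.tendsto a.1).comp hq).sub hu
    have hrhs : Tendsto (fun k => φ (pn (σ k)) - u (σ k) (pn (σ k))) atTop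
        (nhds (φ p₀ - ubar p₀)) :=
      ((hφ.tendsto p₀).comp (hpn.comp hσtop)).sub (hval.comp hσtop)
    have hle : φ a.1 - a.2 ≤ φ p₀ - ubar p₀ :=
      le_of_tendsto_of_tendsto' hlhs hrhs fun k => hqmin (σ k) _ (hpnK (σ k))
    -- a.1 = p₀
    have ha1 : a.1 = p₀ := by
      by_contra h
      have h1 := hstrict a.1 haK.1 h
      have h2 : φ a.1 - ubar a.1 ≤ φ a.1 - a.2 := by linarith
      linarith
    have ha2 : a.2 = ubar p₀ := by
      rw [ha1] at hub' hle
      linarith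
    have : a = (p₀, ubar p₀) := Prod.ext ha1 ha2
    rw [this] at hconv'
    exact hconv'
  constructor
  · exact (continuous_fst.tendsto _).comp key
  · exact (continuous_snd.tendsto _).comp key
end
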